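/- Let H be a graph, G a graph, and u a positive integer with dom(H) ≥ u. Then chose(dom(H), u) · N(H,G) = Σ_{c ∈ K^u(G)} N_c(H,G), where the sum is over all u-cliques c of G and N_c(H,G) is the number of subgraphs J of G isomorphic to H such that every vertex of c is a dominating vertex of J. -/

import Mathlib

open SimpleGraph Finset Filter Topology

/-- `F` is contained in `G` as a subgraph: there is an injective graph homomorphism. -/
def Graph.Contains {β α : Type*} (F : SimpleGraph β) (G : SimpleGraph α) : Prop :=
  ∃ f : F →g G, Function.Injective f

/-- The number of subgraphs of `G` isomorphic to `H`. -/
noncomputable def copyCount' {β α : Type*} (H : SimpleGraph β) (G : SimpleGraph α) : ℕ :=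
  {J : G.Subgraph | Nonempty (J.coe ≃g H)}.ncard

/-- The number of `u`-cliques of `G`. -/
noncomputable def kclique {α : Type*} (u : ℕ) (G : SimpleGraph α) : ℕ :=
  {s : Finset α | G.IsNClique u s}.ncard

/-- The set of dominating vertices of a graph. -/
def domSet {α : Type*} (H : SimpleGraph α) : Set α := {v | ∀ w, w ≠ v → H.Adj v w}

/-- The number of dominating vertices of a graph. -/
noncomputable def domCount {α : Type*} (H : SimpleGraph α) : ℕ := (domSet H).ncard

/-- The set of dominating vertices of a subgraph `J`: vertices of `J` adjacent in `J`
to all other vertices of `J`. -/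
def subDomSet {α : Type*} {G : SimpleGraph α} (J : G.Subgraph) : Set α :=
  {v ∈ J.verts | ∀ w ∈ J.verts, w ≠ v → J.Adj v w}

/-- The common neighborhood of a finite vertex set `c` in `G`. -/
def commonNbhd {α : Type*} (G : SimpleGraph α) (c : Finset α) : Set α :=
  {v | ∀ x ∈ c, G.Adj x v}

/-- `ω(c)`: the size of a largest clique of `G` containing `c`. -/
noncomputable def omegaC {α : Type*} (G : SimpleGraph α) (c : Finset α) : ℕ :=
  sSup {m | ∃ s : Finset α, c ⊆ s ∧ G.IsNClique m s}

/-- `Δ(c)`: the number of common neighbors of `c` in `G`. -/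
noncomputable def deltaC {α : Type*} (G : SimpleGraph α) (c : Finset α) : ℕ :=
  (commonNbhd G c).ncard

/-- `ω(J)`: the max of `ω(c)` over `u`-sets `c` of dominating vertices of the subgraph `J`. -/
noncomputable def omegaJ {α : Type*} (G : SimpleGraph α) (u : ℕ) (J : G.Subgraph) : ℕ :=
  sSup {m | ∃ c : Finset α, ↑c ⊆ subDomSet J ∧ c.card = u ∧ m = omegaC G c}

/-- `Δ(J)`: the max of `Δ(c)` over `u`-sets `c` of dominating vertices of the subgraph `J`. -/
noncomputable def deltaJ {α : Type*} (G : SimpleGraph α) (u : ℕ) (J : G.Subgraph) : ℕ :=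
  sSup {m | ∃ c : Finset α, ↑c ⊆ subDomSet J ∧ c.card = u ∧ m = deltaC G c}

/-- The complete split graph `K_u ∨ I_d`. -/
def completeSplitGraph (u d : ℕ) : SimpleGraph (Fin u ⊕ Fin d) where
  Adj x y := x ≠ y ∧ (x.isLeft ∨ y.isLeft)
  symm := by constructor; rintro x y ⟨h1, h2⟩; exact ⟨h1.symm, h2.symm⟩
  loopless := by constructor; rintro x ⟨h, -⟩; exact h rfl

/-- Disjoint union of a family of graphs. -/
def sigmaGraph {ι : Type*} {β : ι → Type*} (G : ∀ i, SimpleGraph (β i)) :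
    SimpleGraph (Σ i, β i) where
  Adj x y := ∃ (i : ι) (a b : β i), x = ⟨i, a⟩ ∧ y = ⟨i, b⟩ ∧ (G i).Adj a b
  symm := by constructor; rintro x y ⟨i, a, b, rfl, rfl, hab⟩; exact ⟨i, b, a, rfl, rfl, hab.symm⟩
  loopless := by
    constructor
    rintro x ⟨i, a, b, rfl, h2, hab⟩
    injection h2 with h1 h2'
    exact hab.ne h2'

/-- `ex_u(p, H, F)`: maximum number of copies of `H` in an `F`-free graph with exactly
`p` `u`-cliques (graphs taken on `Fin n` for some `n`). -/
noncomputable def exu {ι : Type*} {β : ι → Type*} (u p : ℕ) {h : ℕ} (H : SimpleGraph (Fin h))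
    (F : ∀ i, SimpleGraph (β i)) : ℕ :=
  sSup {N | ∃ (n : ℕ) (G : SimpleGraph (Fin n)),
    (∀ i, ¬ Graph.Contains (F i) G) ∧ kclique u G = p ∧ copyCount' H G = N}



lemma finiteSubgraph {V : Type*} [Finite V] (G : SimpleGraph V) : Finite G.Subgraph := by
  apply Finite.of_injective
    (fun J => (J.verts, fun a b => J.Adj a b) : G.Subgraph → Set V × (V → V → Prop))
  intro a b hab
  simp only [Prod.mk.injEq] at hab
  exact SimpleGraph.Subgraph.ext hab.1 hab.2

lemma subDomSet_eq {V : Type*} {G : SimpleGraph V} (J : G.Subgraph) :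
    subDomSet J = Subtype.val '' (domSet J.coe) := by
  ext v
  constructor
  · rintro ⟨hv, hd⟩
    exact ⟨⟨v, hv⟩, fun w hw => hd w w.2 (fun e => hw (Subtype.ext e)), rfl⟩
  · rintro ⟨⟨v, hv⟩, hd, rfl⟩
    exact ⟨hv, fun w hw hne => hd ⟨w, hw⟩ (fun e => hne (congrArg Subtype.val e))⟩

lemma domSet_image {α β : Type*} {A : SimpleGraph α} {B : SimpleGraph β} (e : A ≃g B) :
    ⇑e '' domSet A = domSet B := by
  ext w
  simp only [domSet, Set.mem_setOf_eq, Set.mem_image]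
  constructor
  · rintro ⟨v, hv, rfl⟩ x hx
    have h1 : A.Adj v (e.symm x) :=
      hv _ (fun h => hx (by rw [← h, RelIso.apply_symm_apply]))
    have h2 := e.map_adj_iff.mpr h1
    simpa using h2
  · intro hw
    refine ⟨e.symm w, fun x hx => ?_, by simp⟩
    have h1 : B.Adj w (e x) := hw _ (fun h => hx (by
      have := congrArg e.symm h; simpa using this))
    have := e.symm.map_adj_iff.mpr h1
    simpa using this

lemma subDomSet_ncard {V : Type*} {G : SimpleGraph V} {h : ℕ} {H : SimpleGraph (Fin h)}
    (J : G.Subgraph) (e : J.coe ≃g H) : (subDomSet J).ncard = domCount H := by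
  rw [subDomSet_eq, Set.ncard_image_of_injective _ Subtype.val_injective, domCount,
    ← domSet_image e, Set.ncard_image_of_injective _ e.injective]

/-- double counting: `C(dom H, u) · N(H,G) = Σ_{c ∈ K^u(G)} N_c(H,G)`. -/
theorem stmt7 {h : ℕ} (H : SimpleGraph (Fin h)) (u : ℕ) (hu : 1 ≤ u)
    (hdom : u ≤ domCount H) {V : Type*} [Fintype V] [DecidableEq V]
    (G : SimpleGraph V) [DecidableRel G.Adj] :
    (domCount H).choose u * copyCount' H G =
      ∑ c ∈ G.cliqueFinset u,
        {J : G.Subgraph | Nonempty (J.coe ≃g H) ∧ ↑c ⊆ subDomSet J}.ncard := by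
  classical
  haveI : Finite G.Subgraph := finiteSubgraph G
  haveI : Fintype G.Subgraph := Fintype.ofFinite _
  set S : Finset G.Subgraph := Finset.univ.filter (fun J => Nonempty (J.coe ≃g H)) with hS
  have hcopy : copyCount' H G = S.card := by
    rw [copyCount', Set.ncard_eq_toFinset_card', Set.toFinset_setOf]
  have hsum : ∀ c ∈ G.cliqueFinset u,
      {J : G.Subgraph | Nonempty (J.coe ≃g H) ∧ ↑c ⊆ subDomSet J}.ncard
        = (S.filter (fun J => ↑c ⊆ subDomSet J)).card := by
    intro c _
    rw [Set.ncard_eq_toFinset_card', Set.toFinset_setOf, hS, Finset.filter_filter]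
  rw [Finset.sum_congr rfl hsum]
  simp_rw [Finset.card_filter]
  rw [Finset.sum_comm]
  have key : ∀ J ∈ S,
      (∑ c ∈ G.cliqueFinset u, if ↑c ⊆ subDomSet J then 1 else 0)
        = (domCount H).choose u := by
    intro J hJ
    obtain ⟨e⟩ := (Finset.mem_filter.mp hJ).2
    rw [← Finset.card_filter]
    have hfe : (G.cliqueFinset u).filter (fun c => ↑c ⊆ subDomSet J)
        = (subDomSet J).toFinset.powersetCard u := by
      ext c
      simp only [Finset.mem_filter, mem_cliqueFinset_iff, Finset.mem_powersetCard]
      constructor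
      · rintro ⟨hc, hsub⟩
        exact ⟨fun x hx => (Set.mem_toFinset).mpr (hsub hx), hc.2⟩
      · rintro ⟨hsub, hcard⟩
        have hsub' : ↑c ⊆ subDomSet J := fun x hx => Set.mem_toFinset.mp (hsub hx)
        refine ⟨⟨fun x hx y hy hxy => ?_, hcard⟩, hsub'⟩
        obtain ⟨hxv, hxd⟩ := hsub' hx
        exact J.adj_sub (hxd y (hsub' hy).1 (Ne.symm hxy))
    rw [hfe, Finset.card_powersetCard, ← Set.ncard_eq_toFinset_card', subDomSet_ncard J e]
  rw [Finset.sum_congr rfl key, Finset.sum_const, hcopy, smul_eq_mul, mul_comm]
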